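/- On reflexive Kripke models, the translation t'(□φ) = t'(φ) ∧ Δt'(φ) is correct: for every modal formula φ and every pointed reflexive model (M,s), M,s ⊨ φ iff M,s ⊨ t'(φ), where t' commutes with atoms and Boolean connectives and maps □ψ to t'(ψ) ∧ Δt'(ψ). -/
import Mathlib

/-- Standard modal formulas: atoms, ¬, ∧, □. -/
inductive MLForm where
  | atom : ℕ → MLForm
  | neg : MLForm → MLForm
  | conj : MLForm → MLForm → MLForm
  | box : MLForm → MLForm

/-- Formulas of the knowing-whether (non-contingency) language: atoms, ¬, ∧, Δ. -/
inductive NCLForm where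
  | atom : ℕ → NCLForm
  | neg : NCLForm → NCLForm
  | conj : NCLForm → NCLForm → NCLForm
  | delta : NCLForm → NCLForm

/-- Satisfaction for the □ language. -/
def mlSat {S : Type*} (R : S → S → Prop) (V : ℕ → S → Prop) : MLForm → S → Prop
  | .atom n => fun s => V n s
  | .neg φ => fun s => ¬ mlSat R V φ s
  | .conj φ ψ => fun s => mlSat R V φ s ∧ mlSat R V ψ s
  | .box φ => fun s => ∀ t, R s t → mlSat R V φ t

/-- Satisfaction for the Δ language. -/
def nclSat {S : Type*} (R : S → S → Prop) (V : ℕ → S → Prop) : NCLForm → S → Prop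
  | .atom n => fun s => V n s
  | .neg φ => fun s => ¬ nclSat R V φ s
  | .conj φ ψ => fun s => nclSat R V φ s ∧ nclSat R V ψ s
  | .delta φ => fun s =>
      (∀ t, R s t → nclSat R V φ t) ∨ (∀ t, R s t → ¬ nclSat R V φ t)

/-- The translation t' : ML → NCL commuting with atoms and Booleans,
with t'(□φ) = t'(φ) ∧ Δ t'(φ). -/
def tr : MLForm → NCLForm
  | .atom n => .atom n
  | .neg φ => .neg (tr φ)
  | .conj φ ψ => .conj (tr φ) (tr ψ)
  | .box φ => .conj (tr φ) (.delta (tr φ))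

/-- On reflexive models the translation is correct: M,s ⊨ φ iff M,s ⊨ t'(φ). -/
theorem tr_correct_reflexive {S : Type*} (R : S → S → Prop) (hrefl : ∀ s, R s s)
    (V : ℕ → S → Prop) (φ : MLForm) (s : S) :
    mlSat R V φ s ↔ nclSat R V (tr φ) s := by
  induction φ generalizing s with
  | atom n => rfl
  | neg φ ih => simp [mlSat, tr, nclSat, ih]
  | conj φ ψ ih1 ih2 => simp [mlSat, tr, nclSat, ih1, ih2]
  | box φ ih =>
    simp only [mlSat, tr, nclSat]
    constructor
    · intro h
      refine ⟨(ih s).1 (h s (hrefl s)), Or.inl fun t ht => (ih t).1 (h t ht)⟩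
    · rintro ⟨hs, h | h⟩ t ht
      · exact (ih t).2 (h t ht)
      · exact absurd hs (h s (hrefl s))
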